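/- Let G be a bipartite graph with no induced P₇ and no induced C₄ + K₂. Let M = {x₁y₁, ..., x_sy_s} with s ≥ 3 be an induced matching with all x_i in part V₁ and all y_i in part V₂, and let B₁ be the set of vertices of V₁ outside the matching having at least one but not all of {y₁,...,y_s} as neighbours. Then for any two vertices v, u ∈ B₁, the sets N(v) ∩ {y₁,...,y_s} and N(u) ∩ {y₁,...,y_s} are either disjoint or one contains the other. -/

import Mathlib

/-- `F` (a bipartite graph given as a relation between its two parts) occurs as an induced
bipartite subgraph of `E`, with the first part of `F` mapped into the first part of `E`. -/
def BipInduced {α β γ δ : Type*} (F : α → β → Prop) (E : γ → δ → Prop) : Prop :=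
  ∃ (f : α ↪ γ) (g : β ↪ δ), ∀ a b, F a b ↔ E (f a) (g b)

/-- `F` occurs as an induced bipartite subgraph of `E`, in either orientation. -/
def BipContains {α β γ δ : Type*} (F : α → β → Prop) (E : γ → δ → Prop) : Prop :=
  BipInduced F E ∨ BipInduced (fun b a => F a b) E

/-- The chordless path `P₇` as a bipartite graph: vertices `a₀ b₀ a₁ b₁ a₂ b₂ a₃` in order. -/
def P7rel : Fin 4 → Fin 3 → Prop := fun a b => a.val = b.val ∨ a.val = b.val + 1

/-- `C₄ + K₂`: the disjoint union of a 4-cycle and an edge. -/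
def C4K2rel : Fin 3 → Fin 3 → Prop := fun a b =>
  (a.val < 2 ∧ b.val < 2) ∨ (a.val = 2 ∧ b.val = 2)

/-- In a `(P₇, C₄+K₂)`-free bipartite graph with an induced matching `x₁y₁,…,x_sy_s`
(`s ≥ 3`), for any two vertices `v, u` of `B₁` (vertices of the first part outside the
matching with at least one but not all of the `yᵢ` as neighbours), the neighbourhoods of
`v` and `u` within `{y₁,…,y_s}` are disjoint or comparable under inclusion. -/
theorem stmt13 {V₁ V₂ : Type*} (E : V₁ → V₂ → Prop)
    (hP7 : ¬ BipContains P7rel E) (hC4K2 : ¬ BipContains C4K2rel E)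
    (s : ℕ) (hs : 3 ≤ s) (x : Fin s → V₁) (y : Fin s → V₂)
    (hx : Function.Injective x) (hy : Function.Injective y)
    (hm : ∀ i j, E (x i) (y j) ↔ i = j) :
    ∀ v u : V₁,
      (∀ i, v ≠ x i) → (∃ i, E v (y i)) → (∃ i, ¬ E v (y i)) →
      (∀ i, u ≠ x i) → (∃ i, E u (y i)) → (∃ i, ¬ E u (y i)) →
      (∀ i, ¬ (E v (y i) ∧ E u (y i))) ∨
      (∀ i, E v (y i) → E u (y i)) ∨
      (∀ i, E u (y i) → E v (y i)) := by
  intro v u hvx _ _ hux _ _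
  by_contra h
  push_neg at h
  obtain ⟨⟨i, hvi, hui⟩, ⟨j, hvj, huj⟩, ⟨k, huk, hvk⟩⟩ := h
  have hij : i ≠ j := fun h => huj (h ▸ hui)
  have hik : i ≠ k := fun h => hvk (h ▸ hvi)
  have hjk : j ≠ k := fun h => hvk (h ▸ hvj)
  have hvu : v ≠ u := fun h => huj (h ▸ hvj)
  have hxjk : x j ≠ x k := fun h => hjk (hx h)
  have h1 : x j ≠ v := (hvx j).symm
  have h2 : x j ≠ u := (hux j).symm
  have h3 : v ≠ x k := hvx k
  have h4 : u ≠ x k := hux k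
  have h3s : x k ≠ v := fun h => h3 h.symm
  have h4s : x k ≠ u := fun h => h4 h.symm
  apply hP7
  left
  refine ⟨⟨![x j, v, u, x k], ?_⟩, ⟨![y j, y i, y k], ?_⟩, ?_⟩
  · intro a b hab
    fin_cases a <;> fin_cases b <;> simp_all
  · intro a b hab
    have hyij : y j ≠ y i := fun h => hij (hy h.symm)
    have hyik : y i ≠ y k := fun h => hik (hy h)
    have hyjk : y j ≠ y k := fun h => hjk (hy h)
    fin_cases a <;> fin_cases b <;> simp_all
  · intro a b
    show P7rel a b ↔ E (![x j, v, u, x k] a) (![y j, y i, y k] b)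
    fin_cases a <;> fin_cases b <;>
      simp [P7rel, hm, hvi, hui, hvj, huj, huk, hvk, hij, hik, hjk,
        hij.symm, hik.symm, hjk.symm]
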